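/- In the degenerate case B = 1, the error of best uniform approximation of sgn(x) on J = [-A,-1] ∪ {1} by real polynomials of degree at most n equals L_n = 2/(T_n(1 + 4/(A−1)) + 1), where T_n is the Chebyshev polynomial of the first kind of degree n. -/

import Mathlib

open MeasureTheory Filter Set Real

/-- sign function: -1 for negative, 1 otherwise (only used on sets avoiding 0) -/
noncomputable def sgn (x : ℝ) : ℝ := if x < 0 then -1 else 1

/-- The error of best uniform approximation of sgn on [-A,-1] ∪ [1,B]
by real polynomials of degree at most n. -/
noncomputable def bestErr (A B : ℝ) (n : ℕ) : ℝ :=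
  sInf {e : ℝ | ∃ p : Polynomial ℝ, p.degree ≤ (n : ℕ) ∧
    e = sSup ((fun x => |sgn x - p.eval x|) '' (Icc (-A) (-1) ∪ Icc 1 B))}

/-- the weight w(x) = ((1−x²)(x+A)(B−x))^(−1/2) -/
noncomputable def wt (A B x : ℝ) : ℝ := 1 / Real.sqrt ((1 - x ^ 2) * (x + A) * (B - x))

/-- the critical point C of the Green function -/
noncomputable def Ccrit (A B : ℝ) : ℝ :=
  (∫ x in (-1 : ℝ)..1, x * wt A B x) / (∫ x in (-1 : ℝ)..1, wt A B x)

/-- η = G(C,∞), the critical value of the Green function -/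
noncomputable def eta (A B : ℝ) : ℝ :=
  ∫ x in (-1 : ℝ)..(Ccrit A B), (Ccrit A B - x) * wt A B x


section Aux
open Polynomial Polynomial.Chebyshev


lemma T_natDeg_aux (n : ℕ) : (T ℝ (n:ℤ)).natDegree ≤ n ∧ (T ℝ (n+1:ℤ)).natDegree ≤ n+1 := by
  induction n with
  | zero => constructor <;> simp [T_zero, T_one]
  | succ n ih =>
    refine ⟨by exact_mod_cast ih.2, ?_⟩
    have h : T ℝ ((n:ℤ)+2) = 2 * X * T ℝ ((n:ℤ)+1) - T ℝ (n:ℤ) := T_add_two ℝ n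
    have : ((n:ℤ)+1+1) = ((n:ℤ)+2) := by ring
    rw [show ((n+1 : ℕ) : ℤ) + 1 = (n:ℤ)+2 by push_cast; ring, h]
    refine le_trans (natDegree_sub_le _ _) (max_le ?_ (le_trans ih.1 (by omega)))
    refine le_trans (natDegree_mul_le) ?_
    have h2 : (2 * X : ℝ[X]).natDegree ≤ 1 := le_trans natDegree_mul_le (by simp)
    have := ih.2
    omega

lemma T_natDeg (n : ℕ) : (T ℝ (n:ℤ)).natDegree ≤ n := (T_natDeg_aux n).1

lemma T_abs_le (n : ℤ) {x : ℝ} (hx : x ∈ Icc (-1:ℝ) 1) : |(T ℝ n).eval x| ≤ 1 := by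
  have : x = Real.cos (Real.arccos x) := (Real.cos_arccos hx.1 hx.2).symm
  rw [this, T_real_cos]
  exact Real.abs_cos_le_one _

lemma T_ge_one_aux {x : ℝ} (hx : 1 ≤ x) (n : ℕ) :
    1 ≤ (T ℝ (n:ℤ)).eval x ∧ (T ℝ (n:ℤ)).eval x ≤ (T ℝ (n+1:ℤ)).eval x := by
  induction n with
  | zero => simp [T_zero, T_one]; exact hx
  | succ n ih =>
    have h : T ℝ ((n:ℤ)+2) = 2 * X * T ℝ ((n:ℤ)+1) - T ℝ (n:ℤ) := T_add_two ℝ n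
    have key : (T ℝ ((n:ℤ)+2)).eval x = 2 * x * (T ℝ ((n:ℤ)+1)).eval x - (T ℝ (n:ℤ)).eval x := by
      rw [h]; simp
    have h1 := ih.1; have h2 := ih.2
    have e1 : ((n+1 : ℕ) : ℤ) = (n:ℤ)+1 := by push_cast; ring
    constructor
    · rw [e1]; nlinarith
    · rw [e1, show (n:ℤ)+1+1 = (n:ℤ)+2 by ring, key]; nlinarith
lemma T_ge_one {x : ℝ} (hx : 1 ≤ x) (n : ℕ) : 1 ≤ (T ℝ (n:ℤ)).eval x := (T_ge_one_aux hx n).1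

lemma cos_nat_pi (k : ℕ) : Real.cos (k * π) = (-1)^k := by
  simpa using Real.cos_add_nat_mul_pi 0 k

lemma exists_root_Ioo (f : ℝ → ℝ) (hf : Continuous f) {a b : ℝ} (hab : a < b)
    (h : f a * f b < 0) : ∃ z ∈ Ioo a b, f z = 0 := by
  have ha : f a ≠ 0 := fun h0 => by simp [h0] at h
  have hb : f b ≠ 0 := fun h0 => by simp [h0] at h
  have hz : ∃ z ∈ Icc a b, f z = 0 := by
    rcases lt_or_gt_of_ne ha with h1 | h1
    · have h2 : 0 < f b := by nlinarith
      have := intermediate_value_Icc hab.le hf.continuousOn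
        (mem_Icc.mpr ⟨h1.le, h2.le⟩)
      obtain ⟨z, hz, hz0⟩ := this
      exact ⟨z, hz, hz0⟩
    · have h2 : f b < 0 := by nlinarith
      have := intermediate_value_Icc' hab.le hf.continuousOn
        (mem_Icc.mpr ⟨h2.le, h1.le⟩)
      obtain ⟨z, hz, hz0⟩ := this
      exact ⟨z, hz, hz0⟩
  obtain ⟨z, hz, hz0⟩ := hz
  refine ⟨z, ⟨hz.1.lt_of_ne ?_, hz.2.lt_of_ne ?_⟩, hz0⟩
  · rintro rfl; exact ha hz0
  · rintro rfl; exact hb hz0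

lemma cheb_extremal (n : ℕ) (hn : 1 ≤ n) (q : ℝ[X]) (hdeg : q.natDegree ≤ n)
    (hb : ∀ x ∈ Icc (-1:ℝ) 1, |q.eval x| ≤ 1) {σ : ℝ} (hσ : 1 ≤ σ) :
    |q.eval σ| ≤ (T ℝ (n:ℤ)).eval σ := by
  rcases eq_or_lt_of_le hσ with rfl | hσ1
  · exact le_trans (hb 1 (by norm_num)) (T_ge_one le_rfl n)
  by_contra hcon
  push_neg at hcon
  set Tσ := (T ℝ (n:ℤ)).eval σ with hTσ
  have hT1 : 1 ≤ Tσ := T_ge_one hσ n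
  have hq0 : q.eval σ ≠ 0 := by
    intro h0; rw [h0] at hcon; simp at hcon; linarith
  set c := Tσ / q.eval σ with hc
  have hcabs : |c| < 1 := by
    rw [hc, abs_div, abs_of_pos (by linarith : (0:ℝ) < Tσ)]
    rw [div_lt_one (abs_pos.mpr hq0)]
    exact hcon
  set r := T ℝ (n:ℤ) - Polynomial.C c * q with hr
  have hrdeg : r.natDegree ≤ n := by
    refine le_trans (natDegree_sub_le _ _) (max_le (T_natDeg n) ?_)
    exact le_trans natDegree_mul_le (by simp [natDegree_C, hdeg])
  have hnpos : (0:ℝ) < n := by exact_mod_cast hn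
  -- nodes
  set xk : ℕ → ℝ := fun k => Real.cos (k * π / n) with hxk
  have hangle : ∀ k : ℕ, k ≤ n → (k * π / n : ℝ) ∈ Icc 0 π := by
    intro k hk
    constructor
    · positivity
    · rw [div_le_iff₀ hnpos]
      have : (k:ℝ) ≤ n := by exact_mod_cast hk
      nlinarith [Real.pi_pos]
  have hmem : ∀ k : ℕ, k ≤ n → xk k ∈ Icc (-1:ℝ) 1 :=
    fun k hk => ⟨Real.neg_one_le_cos _, Real.cos_le_one _⟩
  have hanti : ∀ j k : ℕ, j < k → k ≤ n → xk k < xk j := by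
    intro j k hjk hk
    have hlt : (j:ℝ) * π / n < (k:ℝ) * π / n := by
      rw [div_lt_div_iff₀ hnpos hnpos]
      have hj : (j:ℝ) < k := by exact_mod_cast hjk
      nlinarith [mul_pos (mul_pos (sub_pos.mpr hj) Real.pi_pos) hnpos]
    simp only [hxk]
    exact Real.strictAntiOn_cos (hangle j (by omega)) (hangle k hk) hlt
  have hTx : ∀ k : ℕ, (T ℝ (n:ℤ)).eval (xk k) = (-1)^k := by
    intro k
    rw [hxk]
    simp only
    rw [T_real_cos]
    have : (n:ℝ) * ((k:ℝ) * π / n) = k * π := by field_simp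
    rw [show ((n:ℤ):ℝ) = (n:ℝ) by push_cast; ring, this, cos_nat_pi]
  have hsign : ∀ k : ℕ, k ≤ n → 0 < (-1:ℝ)^k * r.eval (xk k) := by
    intro k hk
    have hre : r.eval (xk k) = (-1)^k - c * q.eval (xk k) := by
      rw [hr]; simp [hTx k]
    have habs : |c * q.eval (xk k)| < 1 := by
      rw [abs_mul]
      calc |c| * |q.eval (xk k)| ≤ |c| * 1 :=
            mul_le_mul_of_nonneg_left (hb _ (hmem k hk)) (abs_nonneg _)
        _ < 1 := by rw [mul_one]; exact hcabs
    have h1 : (-1:ℝ)^k * ((-1:ℝ)^k) = 1 := by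
      rw [← pow_add, Even.neg_one_pow ⟨k, rfl⟩]
    rw [hre, mul_sub, h1]
    have : |(-1:ℝ)^k * (c * q.eval (xk k))| < 1 := by
      rw [abs_mul, abs_pow, abs_neg, abs_one, one_pow, one_mul]; exact habs
    have := abs_lt.mp this
    linarith [this.2]
  -- roots in each interval
  have hroot : ∀ k : Fin n, ∃ z ∈ Ioo (xk (k+1)) (xk k), r.eval z = 0 := by
    intro ⟨k, hk⟩
    simp only
    apply exists_root_Ioo (fun x => r.eval x) r.continuous
    · exact hanti k (k+1) (by omega) (by omega)
    · have h1 := hsign k (by omega)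
      have h2 := hsign (k+1) (by omega)
      have : (0:ℝ) < ((-1)^(k+1) * r.eval (xk (k+1))) * ((-1)^k * r.eval (xk k)) :=
        mul_pos h2 h1
      have hpow : (-1:ℝ)^(k+1) * (-1)^k = -1 := by
        rw [← pow_add, show k+1+k = 2*k+1 by ring, pow_succ, pow_mul]
        norm_num
      have he : ((-1:ℝ)^(k+1) * r.eval (xk (k+1))) * ((-1)^k * r.eval (xk k))
          = -(r.eval (xk (k+1)) * r.eval (xk k)) := by
        have h5 : ((-1:ℝ)^(k+1) * r.eval (xk (k+1))) * ((-1)^k * r.eval (xk k))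
            = ((-1:ℝ)^(k+1) * (-1)^k) * (r.eval (xk (k+1)) * r.eval (xk k)) := by ring
        rw [h5, hpow, neg_one_mul]
      rw [he] at this
      linarith
  choose z hz hz0 using hroot
  -- build injection
  set f : Option (Fin n) → ℝ := fun o => o.elim σ z with hf
  have hzlt : ∀ k : Fin n, z k < 1 := by
    intro k
    calc z k < xk k := (hz k).2
      _ ≤ 1 := (hmem k (by omega)).2
  have hinj : Function.Injective f := by
    intro a b hab
    match a, b with
    | Option.none, Option.none => rfl
    | Option.none, Option.some k =>
        exfalso
        have h : σ = z k := hab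
        linarith [hzlt k]
    | Option.some k, Option.none =>
        exfalso
        have h : z k = σ := hab
        linarith [hzlt k]
    | Option.some k, Option.some j =>
        congr
        by_contra hne
        have hne' : k ≠ j := fun h => hne (by rw [h])
        simp only [hf, Option.elim] at hab
        rcases lt_or_gt_of_ne hne' with h | h
        · -- k < j : z j < xk j ≤ xk (k+1) < z k
          have h1 : z j < xk j := (hz j).2
          have h2 : xk j ≤ xk (k+1) := by
            rcases eq_or_lt_of_le (show (k:ℕ)+1 ≤ j from h) with h3 | h3
            · rw [← h3]
            · exact (hanti (k+1) j h3 (by omega)).le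
          have h3 : xk (k+1) < z k := (hz k).1
          linarith [hab]
        · have h1 : z k < xk k := (hz k).2
          have h2 : xk k ≤ xk (j+1) := by
            rcases eq_or_lt_of_le (show (j:ℕ)+1 ≤ k from h) with h3 | h3
            · rw [← h3]
            · exact (hanti (j+1) k h3 (by omega)).le
          have h3 : xk (j+1) < z j := (hz j).1
          linarith [hab]
  have heval : ∀ o : Option (Fin n), r.eval (f o) = 0 := by
    intro o
    match o with
    | Option.none =>
        simp only [hf, Option.elim, hr]
        simp
        rw [hc]
        field_simp
        exact sub_eq_zero.mpr hTσ.symm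
    | Option.some k => exact hz0 k
  have hcard : r.natDegree < Fintype.card (Option (Fin n)) := by
    simp [Fintype.card_option]
    omega
  have hr0 : r = 0 := Polynomial.eq_zero_of_natDegree_lt_card_of_eval_eq_zero r hinj heval hcard
  have := hsign 0 (by omega)
  rw [hr0] at this
  simp at this

lemma cheb_extremal_scaled (n : ℕ) (hn : 1 ≤ n) (q : ℝ[X]) (hdeg : q.natDegree ≤ n)
    {e : ℝ} (he : 0 ≤ e) (hb : ∀ x ∈ Icc (-1:ℝ) 1, |q.eval x| ≤ e) {σ : ℝ} (hσ : 1 ≤ σ) :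
    |q.eval σ| ≤ e * (T ℝ (n:ℤ)).eval σ := by
  rcases eq_or_lt_of_le he with rfl | he0
  · have hq : q = 0 := by
      apply Polynomial.eq_zero_of_infinite_isRoot
      have hsub : Icc (-1:ℝ) 1 ⊆ {x | q.IsRoot x} := by
        intro x hx
        have := hb x hx
        simpa [Polynomial.IsRoot] using abs_nonpos_iff.mp this
      exact Set.Infinite.mono hsub (Set.Icc_infinite (show (-1:ℝ) < 1 by norm_num))
    simp [hq]
  · have hb' : ∀ x ∈ Icc (-1:ℝ) 1, |(Polynomial.C e⁻¹ * q).eval x| ≤ 1 := by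
      intro x hx
      rw [eval_mul, eval_C, abs_mul, abs_of_pos (inv_pos.mpr he0)]
      rw [inv_mul_le_iff₀ he0, mul_one]
      exact hb x hx
    have hdeg' : (Polynomial.C e⁻¹ * q).natDegree ≤ n :=
      le_trans natDegree_mul_le (by simp [natDegree_C, hdeg])
    have := cheb_extremal n hn _ hdeg' hb' hσ
    rw [eval_mul, eval_C, abs_mul, abs_of_pos (inv_pos.mpr he0), inv_mul_le_iff₀ he0] at this
    calc |q.eval σ| ≤ e * ((T ℝ (n:ℤ)).eval σ * 1) := by simpa using this
      _ = e * (T ℝ (n:ℤ)).eval σ := by ring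


end Aux

section Main
open Polynomial Polynomial.Chebyshev

theorem degenerate_case_error (A : ℝ) (hA : 1 < A) (n : ℕ) (hn : 1 ≤ n) :
    bestErr A 1 n = 2 / ((Polynomial.Chebyshev.T ℝ (n : ℤ)).eval (1 + 4 / (A - 1)) + 1) := by
  have hA1 : (0:ℝ) < A - 1 := by linarith
  set σ : ℝ := 1 + 4 / (A - 1) with hσdef
  have hσ1 : 1 < σ := by
    rw [hσdef]; have : 0 < 4 / (A-1) := by positivity
    linarith
  set Tσ : ℝ := (T ℝ (n:ℤ)).eval σ with hTσ
  have hT1 : 1 ≤ Tσ := T_ge_one hσ1.le n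
  have hTpos : 0 < Tσ + 1 := by linarith
  set c : ℝ := 2 / (Tσ + 1) with hcdef
  have hc0 : 0 < c := by positivity
  set J : Set ℝ := Icc (-A) (-1) ∪ Icc 1 1 with hJ
  have h1J : (1:ℝ) ∈ J := Or.inr (by norm_num)
  have hsgn_neg : ∀ x ∈ Icc (-A) (-1), sgn x = -1 := by
    intro x hx
    have : x < 0 := lt_of_le_of_lt hx.2 (by norm_num)
    simp [sgn, this]
  have hsgn1 : sgn 1 = 1 := by norm_num [sgn]
  -- the optimal polynomial
  set ψ : ℝ[X] := Polynomial.C (2/(A-1)) * X + Polynomial.C ((A+1)/(A-1)) with hψ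
  set p₀ : ℝ[X] := Polynomial.C (-1) + Polynomial.C c * ((T ℝ (n:ℤ)).comp ψ) with hp₀
  have hψdeg : ψ.natDegree ≤ 1 := by
    refine le_trans (natDegree_add_le _ _) (max_le ?_ (by simp))
    exact le_trans natDegree_mul_le (by simp)
  have hp₀deg : p₀.degree ≤ (n : ℕ) := by
    rw [← Polynomial.natDegree_le_iff_degree_le]
    refine le_trans (natDegree_add_le _ _) (max_le (by simp) ?_)
    refine le_trans natDegree_mul_le ?_
    simp only [natDegree_C, zero_add]
    refine le_trans (natDegree_comp_le) ?_
    calc (T ℝ (n:ℤ)).natDegree * ψ.natDegree ≤ n * 1 :=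
          Nat.mul_le_mul (T_natDeg n) hψdeg
      _ = n := by ring
  have hψeval : ∀ x : ℝ, ψ.eval x = (2*x + A + 1)/(A-1) := by
    intro x; rw [hψ]; simp; field_simp; ring
  have hp₀eval : ∀ x : ℝ, p₀.eval x = -1 + c * (T ℝ (n:ℤ)).eval (ψ.eval x) := by
    intro x; rw [hp₀]; simp [eval_comp]
  have hψσ : ψ.eval 1 = σ := by
    rw [hψeval, hσdef]; field_simp; ring
  have hψmem : ∀ x ∈ Icc (-A) (-1), ψ.eval x ∈ Icc (-1:ℝ) 1 := by
    intro x hx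
    rw [hψeval]
    constructor
    · rw [le_div_iff₀ hA1]; nlinarith [hx.1]
    · rw [div_le_iff₀ hA1]; nlinarith [hx.2]
  have hp₀1 : |sgn 1 - p₀.eval 1| = c := by
    rw [hsgn1, hp₀eval, hψσ, ← hTσ]
    have : 1 - (-1 + c * Tσ) = c := by
      rw [hcdef]; field_simp; ring
    rw [this, abs_of_pos hc0]
  -- upper bound part : c is in the set
  have hub : ∀ y ∈ (fun x => |sgn x - p₀.eval x|) '' J, y ≤ c := by
    rintro y ⟨x, hx, rfl⟩
    show |sgn x - p₀.eval x| ≤ c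
    rcases hx with hx | hx
    · rw [hsgn_neg x hx, hp₀eval]
      have : -1 - (-1 + c * (T ℝ (n:ℤ)).eval (ψ.eval x)) = -(c * (T ℝ (n:ℤ)).eval (ψ.eval x)) := by ring
      rw [this, abs_neg, abs_mul, abs_of_pos hc0]
      calc c * |(T ℝ (n:ℤ)).eval (ψ.eval x)| ≤ c * 1 :=
            mul_le_mul_of_nonneg_left (T_abs_le (n:ℤ) (hψmem x hx)) hc0.le
        _ = c := mul_one c
    · have hx1 : x = 1 := le_antisymm hx.2 hx.1
      rw [hx1, hp₀1]
  have hmemc : c ∈ (fun x => |sgn x - p₀.eval x|) '' J :=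
    ⟨1, h1J, hp₀1⟩
  have hsup : sSup ((fun x => |sgn x - p₀.eval x|) '' J) = c :=
    le_antisymm (csSup_le ⟨c, hmemc⟩ hub) (le_csSup ⟨c, hub⟩ hmemc)
  -- lower bound part
  have hlow : ∀ e ∈ {e : ℝ | ∃ p : Polynomial ℝ, p.degree ≤ (n : ℕ) ∧
      e = sSup ((fun x => |sgn x - p.eval x|) '' (Icc (-A) (-1) ∪ Icc 1 1))}, c ≤ e := by
    rintro e ⟨p, hpdeg, rfl⟩
    set g : ℝ → ℝ := fun x => |sgn x - p.eval x| with hg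
    have hbdd : BddAbove (g '' J) := by
      rw [hJ, Set.image_union]
      apply BddAbove.union
      · have heq : g '' Icc (-A) (-1) = (fun x => |-1 - p.eval x|) '' Icc (-A) (-1) :=
          Set.image_congr (fun x hx => by rw [hg]; simp only; rw [hsgn_neg x hx])
        rw [heq]
        exact (isCompact_Icc.image ((Continuous.abs (continuous_const.sub (Polynomial.continuous p))))).bddAbove
      · rw [Set.Icc_self, Set.image_singleton]
        exact bddAbove_singleton
    have hle : ∀ x ∈ J, g x ≤ sSup (g '' J) :=
      fun x hx => le_csSup hbdd (Set.mem_image_of_mem g hx)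
    set e := sSup (g '' J) with he
    have he0 : 0 ≤ e := le_trans (abs_nonneg _) (hle 1 h1J)
    have h1 : ∀ x ∈ Icc (-A) (-1), |p.eval x + 1| ≤ e := by
      intro x hx
      have := hle x (Or.inl hx)
      rw [hg] at this
      simp only at this
      rw [hsgn_neg x hx] at this
      calc |p.eval x + 1| = |-1 - p.eval x| := by rw [abs_sub_comm]; congr 1; ring
        _ ≤ e := this
    have h2 : |1 - p.eval 1| ≤ e := by
      have := hle 1 h1J
      rw [hg] at this
      simpa [hsgn1] using this
    -- apply extremal lemma
    set φ : ℝ[X] := Polynomial.C ((A-1)/2) * X + Polynomial.C (-((A+1)/2)) with hφ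
    have hφeval : ∀ t : ℝ, φ.eval t = (A-1)/2 * t - (A+1)/2 := by
      intro t; rw [hφ]; simp; ring
    have hφσ : φ.eval σ = 1 := by
      rw [hφeval, hσdef]; field_simp; ring
    have hφmem : ∀ t ∈ Icc (-1:ℝ) 1, φ.eval t ∈ Icc (-A) (-1) := by
      intro t ht
      rw [hφeval]
      constructor
      · nlinarith [ht.1]
      · nlinarith [ht.2]
    set q : ℝ[X] := p.comp φ + 1 with hq
    have hpnd : p.natDegree ≤ n := Polynomial.natDegree_le_iff_degree_le.mpr hpdeg
    have hφdeg : φ.natDegree ≤ 1 := by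
      refine le_trans (natDegree_add_le _ _) (max_le ?_ (by simp))
      exact le_trans natDegree_mul_le (by simp)
    have hqdeg : q.natDegree ≤ n := by
      refine le_trans (natDegree_add_le _ _) (max_le ?_ (by simp))
      refine le_trans natDegree_comp_le ?_
      calc p.natDegree * φ.natDegree ≤ n * 1 := Nat.mul_le_mul hpnd hφdeg
        _ = n := by ring
    have hqeval : ∀ t : ℝ, q.eval t = p.eval (φ.eval t) + 1 := by
      intro t; rw [hq]; simp [eval_comp]
    have hqb : ∀ t ∈ Icc (-1:ℝ) 1, |q.eval t| ≤ e := by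
      intro t ht
      rw [hqeval]
      exact h1 _ (hφmem t ht)
    have hext := cheb_extremal_scaled n hn q hqdeg he0 hqb hσ1.le
    rw [hqeval, hφσ] at hext
    have hp1 : 1 - e ≤ p.eval 1 := by
      have := (abs_le.mp h2).2
      linarith
    have h3 : p.eval 1 + 1 ≤ e * Tσ := le_trans (le_abs_self _) hext
    rw [hcdef, div_le_iff₀ hTpos]
    nlinarith
  -- conclude
  have hcmem : c ∈ {e : ℝ | ∃ p : Polynomial ℝ, p.degree ≤ (n : ℕ) ∧
      e = sSup ((fun x => |sgn x - p.eval x|) '' (Icc (-A) (-1) ∪ Icc 1 1))} :=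
    ⟨p₀, hp₀deg, hsup.symm⟩
  rw [bestErr]
  exact le_antisymm (csInf_le ⟨c, hlow⟩ hcmem) (le_csInf ⟨c, hcmem⟩ hlow)

end Main
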